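/- For integers n ≥ 1 and 0 ≤ t < p ≤ n, define χ(s) = (-1)^{(s-t)} for s in range; then the sequence a_p := (-1)^{p-t}·C(n,p)·C(p-1,t) satisfies the recurrence ∑_{s=t+1}^{p} a_s · C(n-1-s, p-s) = (-1)^{p-t}·C(n-1,t) - C(n-1,p) for all p > t, and moreover this recurrence determines a_{t+1}, a_{t+2}, ..., a_n uniquely. -/

import Mathlib

open Polynomial Finset

/-- The Gaussian binomial coefficient as a polynomial in ℤ[q],
defined via the q-Pascal recursion; it is 0 when b > a. -/
noncomputable def qbinom : ℕ → ℕ → Polynomial ℤ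
  | _, 0 => 1
  | 0, _ + 1 => 0
  | a + 1, b + 1 => X ^ (b + 1) * qbinom a (b + 1) + qbinom a b

private lemma lemW (t p : ℕ) (h : t < p) :
    ∑ r ∈ Finset.Icc t p, (-1 : ℤ) ^ (r - t) * (p.choose r) * (r.choose t) = 0 := by
  have hmap : Finset.Icc t p = (Finset.Icc 0 (p - t)).map (addRightEmbedding t) := by
    rw [Finset.map_add_right_Icc]
    congr 1 <;> omega
  rw [hmap, Finset.sum_map]
  have : ∀ m ∈ Finset.Icc 0 (p - t),
      (-1 : ℤ) ^ ((addRightEmbedding t) m - t) * (p.choose ((addRightEmbedding t) m)) *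
        (((addRightEmbedding t) m).choose t)
      = (p.choose t : ℤ) * ((-1 : ℤ) ^ m * ((p - t).choose m)) := by
    intro m hm
    simp only [addRightEmbedding_apply, Finset.mem_Icc] at hm ⊢
    have hmp : m + t ≤ p := by omega
    have hrev : p.choose (m + t) * (m + t).choose t = p.choose t * (p - t).choose m := by
      have := Nat.choose_mul (n := p) (k := m + t) (s := t) (Nat.le_add_left t m)
      simpa using this
    have : (p.choose (m + t) : ℤ) * ((m + t).choose t) = (p.choose t : ℤ) * ((p - t).choose m) := by
      exact_mod_cast congrArg (Nat.cast : ℕ → ℤ) hrev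
    rw [Nat.add_sub_cancel]
    linear_combination (-1 : ℤ) ^ m * this
  rw [Finset.sum_congr rfl this, ← Finset.mul_sum]
  have : Finset.Icc 0 (p - t) = Finset.range (p - t + 1) := by
    ext x; simp [Nat.lt_succ_iff]
  rw [this, Int.alternating_sum_range_choose_of_ne (by omega), mul_zero]

private lemma lemU (t : ℕ) : ∀ p, t < p →
    ∑ s ∈ Finset.Icc (t + 1) p, (-1 : ℤ) ^ (s - t) * (p.choose s) * ((s - 1).choose t) = -1 := by
  intro p
  induction p with
  | zero => omega
  | succ p ih =>
    intro hp
    rcases Nat.lt_or_ge t p with h | h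
    · -- step
      have hmap : Finset.Icc (t + 1) (p + 1) = (Finset.Icc t p).map (addRightEmbedding 1) := by
        rw [Finset.map_add_right_Icc]
      rw [hmap, Finset.sum_map]
      have split : ∀ r ∈ Finset.Icc t p,
          (-1 : ℤ) ^ ((addRightEmbedding 1) r - t) * ((p + 1).choose ((addRightEmbedding 1) r)) *
            (((addRightEmbedding 1) r - 1).choose t)
          = (-(-1 : ℤ) ^ (r - t) * (p.choose r) * (r.choose t))
            + (-1 : ℤ) ^ ((r + 1) - t) * (p.choose (r + 1)) * (r.choose t) := by
        intro r hr
        simp only [addRightEmbedding_apply, Finset.mem_Icc] at hr ⊢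
        have h1 : (p + 1).choose (r + 1) = p.choose r + p.choose (r + 1) := Nat.choose_succ_succ p r
        have h2 : r + 1 - t = (r - t) + 1 := by omega
        rw [Nat.add_sub_cancel, h1, h2]
        push_cast
        ring
      rw [Finset.sum_congr rfl split, Finset.sum_add_distrib]
      have hW : ∑ r ∈ Finset.Icc t p, (-(-1 : ℤ) ^ (r - t) * (p.choose r) * (r.choose t)) = 0 := by
        have := lemW t p h
        have : ∑ r ∈ Finset.Icc t p, (-(-1 : ℤ) ^ (r - t) * (p.choose r) * (r.choose t))
            = -∑ r ∈ Finset.Icc t p, (-1 : ℤ) ^ (r - t) * (p.choose r) * (r.choose t) := by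
          rw [← Finset.sum_neg_distrib]; apply Finset.sum_congr rfl; intros; ring
        rw [this, lemW t p h, neg_zero]
      rw [hW, zero_add]
      -- second sum equals ih sum
      have hmap2 : ∑ r ∈ Finset.Icc t p, (-1 : ℤ) ^ ((r + 1) - t) * (p.choose (r + 1)) * (r.choose t)
          = ∑ s ∈ Finset.Icc (t + 1) (p + 1), (-1 : ℤ) ^ (s - t) * (p.choose s) * ((s - 1).choose t) := by
        rw [hmap, Finset.sum_map]
        apply Finset.sum_congr rfl
        intro r hr
        simp only [addRightEmbedding_apply, Nat.add_sub_cancel]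
      rw [hmap2, ← Finset.insert_Icc_right_eq_Icc_add_one (by omega), Finset.sum_insert (by simp)]
      rw [Nat.choose_eq_zero_of_lt (by omega : p < p + 1)]
      push_cast
      rw [ih h]
      ring
    · -- base: p = t
      have hpt : p = t := by omega
      subst hpt
      rw [Finset.Icc_self, Finset.sum_singleton]
      simp

private lemma lemT (n t p : ℕ) (htp : t < p) (hpn : p ≤ n) :
    ∑ s ∈ Finset.Icc (t + 1) p,
        ((-1 : ℤ) ^ (s - t) * (n.choose s) * ((s - 1).choose t)) * ((n - s).choose (p - s)) =
      -(n.choose p : ℤ) := by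
  have key : ∀ s ∈ Finset.Icc (t + 1) p,
      ((-1 : ℤ) ^ (s - t) * (n.choose s) * ((s - 1).choose t)) * ((n - s).choose (p - s))
      = (n.choose p : ℤ) * ((-1 : ℤ) ^ (s - t) * (p.choose s) * ((s - 1).choose t)) := by
    intro s hs
    simp only [Finset.mem_Icc] at hs
    have hrev : n.choose p * p.choose s = n.choose s * (n - s).choose (p - s) :=
      Nat.choose_mul hs.2
    have hrev' : (n.choose p : ℤ) * (p.choose s) = (n.choose s : ℤ) * ((n - s).choose (p - s)) :=
      by exact_mod_cast congrArg (Nat.cast : ℕ → ℤ) hrev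
    linear_combination (-((-1 : ℤ) ^ (s - t) * ((s - 1).choose t))) * hrev'
  rw [Finset.sum_congr rfl key, ← Finset.mul_sum, lemU t p htp, mul_neg_one]

private lemma lemS (n t : ℕ) (hn : 1 ≤ n) : ∀ p, t < p → p ≤ n →
    ∑ s ∈ Finset.Icc (t + 1) p,
        ((-1 : ℤ) ^ (s - t) * (n.choose s) * ((s - 1).choose t)) * ((n - 1 - s).choose (p - s)) =
      (-1 : ℤ) ^ (p - t) * ((n - 1).choose t) - ((n - 1).choose p) := by
  intro p
  induction p with
  | zero => omega
  | succ p ih =>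
    intro hp hpn
    rcases Nat.lt_or_ge t p with h | h
    · -- step: t < p, p + 1 ≤ n
      have hT := lemT n t (p + 1) (by omega) hpn
      have hS := ih h (by omega)
      -- split top term of the (p+1)-sums
      rw [← Finset.insert_Icc_right_eq_Icc_add_one (by omega : t + 1 ≤ p + 1), Finset.sum_insert (by simp)] at hT ⊢
      -- Pascal on each term of the Icc (t+1) p part of hT
      have pas : ∀ s ∈ Finset.Icc (t + 1) p,
          ((-1 : ℤ) ^ (s - t) * (n.choose s) * ((s - 1).choose t)) * ((n - s).choose (p + 1 - s))
          = ((-1 : ℤ) ^ (s - t) * (n.choose s) * ((s - 1).choose t)) * ((n - 1 - s).choose (p - s))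
            + ((-1 : ℤ) ^ (s - t) * (n.choose s) * ((s - 1).choose t)) * ((n - 1 - s).choose (p + 1 - s)) := by
        intro s hs
        simp only [Finset.mem_Icc] at hs
        have h1 : n - s = (n - 1 - s) + 1 := by omega
        have h2 : p + 1 - s = (p - s) + 1 := by omega
        rw [h1, h2, Nat.choose_succ_succ]
        push_cast
        ring
      rw [Finset.sum_congr rfl pas, Finset.sum_add_distrib, hS] at hT
      -- now hT : a_{p+1} * C(n-(p+1), 0) + (RHS(p) + Σ') = -C(n,p+1)
      have e1 : n - (p + 1) - 0 = n - (p + 1) := rfl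
      have hc1 : ((n - (p + 1)).choose (p + 1 - (p + 1)) : ℤ) = 1 := by
        rw [Nat.sub_self, Nat.choose_zero_right]; norm_num
      have hc2 : ((n - 1 - (p + 1)).choose (p + 1 - (p + 1)) : ℤ) = 1 := by
        rw [Nat.sub_self, Nat.choose_zero_right]; norm_num
      rw [hc1] at hT
      rw [hc2]
      -- goal: a_{p+1} * 1 + Σ' = RHS(p+1)
      have pnat : n.choose (p + 1) = (n - 1).choose p + (n - 1).choose (p + 1) := by
        have h4 := Nat.choose_succ_succ (n - 1) p
        simp only [Nat.succ_eq_add_one] at h4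
        rwa [Nat.sub_add_cancel hn] at h4
      have pascal2 : (n.choose (p + 1) : ℤ) = ((n - 1).choose p) + ((n - 1).choose (p + 1)) := by
        exact_mod_cast congrArg (Nat.cast : ℕ → ℤ) pnat
      have hsign : (p + 1 - t) = (p - t) + 1 := by omega
      simp only [Nat.add_sub_cancel] at hT ⊢
      rw [hsign, pow_succ] at hT ⊢
      rw [pascal2] at hT ⊢
      linear_combination hT
    · -- base p = t
      have hpt : p = t := by omega
      subst hpt
      rw [Finset.Icc_self, Finset.sum_singleton]
      have h1 : p + 1 - p = 1 := by omega
      have h2 : p + 1 - (p + 1) = 0 := by omega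
      have h3 : p + 1 - 1 = p := by omega
      rw [h1, h2, h3, Nat.choose_self, Nat.choose_zero_right]
      have pnat : n.choose (p + 1) = (n - 1).choose p + (n - 1).choose (p + 1) := by
        have h4 := Nat.choose_succ_succ (n - 1) p
        simp only [Nat.succ_eq_add_one] at h4
        rwa [Nat.sub_add_cancel hn] at h4
      have pascal : (n.choose (p + 1) : ℤ) = ((n - 1).choose p) + ((n - 1).choose (p + 1)) := by
        exact_mod_cast congrArg (Nat.cast : ℕ → ℤ) pnat
      push_cast
      rw [pascal]
      ring

/-- The sequence a_p = (-1)^{p-t}·C(n,p)·C(p-1,t) satisfies the recurrence of Lemma 3.2,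
and the recurrence determines it uniquely. -/
theorem euler_char_recurrence_unique (n t : ℕ) (hn : 1 ≤ n) (ht : t < n) :
    (∀ p, t < p → p ≤ n →
      ∑ s ∈ Finset.Icc (t + 1) p,
          ((-1 : ℤ) ^ (s - t) * (n.choose s) * ((s - 1).choose t)) * ((n - 1 - s).choose (p - s)) =
        (-1 : ℤ) ^ (p - t) * ((n - 1).choose t) - ((n - 1).choose p)) ∧
    (∀ b : ℕ → ℤ,
      (∀ p, t < p → p ≤ n →
        ∑ s ∈ Finset.Icc (t + 1) p, b s * ((n - 1 - s).choose (p - s)) =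
          (-1 : ℤ) ^ (p - t) * ((n - 1).choose t) - ((n - 1).choose p)) →
      ∀ p, t < p → p ≤ n →
        b p = (-1 : ℤ) ^ (p - t) * (n.choose p) * ((p - 1).choose t)) := by
  constructor
  · exact lemS n t hn
  · intro b hb p
    induction p using Nat.strong_induction_on with
    | _ p ih =>
      intro hp hpn
      have h1 := lemS n t hn p hp hpn
      have h2 := hb p hp hpn
      have hzero : ∑ s ∈ Finset.Icc (t + 1) p,
          (b s - ((-1 : ℤ) ^ (s - t) * (n.choose s) * ((s - 1).choose t)))
            * ((n - 1 - s).choose (p - s)) = 0 := by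
        have : ∀ s ∈ Finset.Icc (t + 1) p,
            (b s - ((-1 : ℤ) ^ (s - t) * (n.choose s) * ((s - 1).choose t)))
              * ((n - 1 - s).choose (p - s))
            = b s * ((n - 1 - s).choose (p - s))
              - ((-1 : ℤ) ^ (s - t) * (n.choose s) * ((s - 1).choose t))
                * ((n - 1 - s).choose (p - s)) := by
          intro s _; ring
        rw [Finset.sum_congr rfl this, Finset.sum_sub_distrib, h1, h2, sub_self]
      obtain ⟨q, rfl⟩ : ∃ q, p = q + 1 := ⟨p - 1, by omega⟩
      rw [← Finset.insert_Icc_right_eq_Icc_add_one (by omega : t + 1 ≤ q + 1),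
        Finset.sum_insert (by simp)] at hzero
      have hrest : ∑ s ∈ Finset.Icc (t + 1) q,
          (b s - ((-1 : ℤ) ^ (s - t) * (n.choose s) * ((s - 1).choose t)))
            * ((n - 1 - s).choose (q + 1 - s)) = 0 := by
        apply Finset.sum_eq_zero
        intro s hs
        simp only [Finset.mem_Icc] at hs
        have := ih s (by omega) (by omega) (by omega)
        rw [this, sub_self, zero_mul]
      rw [hrest, add_zero, Nat.sub_self, Nat.choose_zero_right] at hzero
      push_cast at hzero
      simp only [Nat.add_sub_cancel]
      linarith [hzero]
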